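/- For all natural numbers m and s with 0 ≤ s ≤ m, one has (2s−1)!!·(2m−2s−1)!!·binom(m,s) ≤ (2m−1)!!. -/
import Mathlib

/-- `oddDoubleFact k = (2k-1)!! = (2k-1)(2k-3)⋯3⋅1`, with `oddDoubleFact 0 = (-1)!! = 1`. -/
def oddDoubleFact : ℕ → ℕ
  | 0 => 1
  | (k + 1) => (2 * k + 1) * oddDoubleFact k

theorem doubleFact_mul_choose_le (m s : ℕ) (h : s ≤ m) :
    oddDoubleFact s * oddDoubleFact (m - s) * m.choose s ≤ oddDoubleFact m := by
  induction m generalizing s with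
  | zero => interval_cases s; simp [oddDoubleFact]
  | succ m ih =>
    cases s with
    | zero => simp [oddDoubleFact]
    | succ k =>
      have hk : k ≤ m := Nat.succ_le_succ_iff.mp h
      rw [Nat.succ_sub_succ, Nat.choose_succ_succ]
      have h1 : oddDoubleFact (k+1) * oddDoubleFact (m-k) * m.choose k
          ≤ (2*k+1) * oddDoubleFact m := by
        calc oddDoubleFact (k+1) * oddDoubleFact (m-k) * m.choose k
            = (2*k+1) * (oddDoubleFact k * oddDoubleFact (m-k) * m.choose k) := by
              simp [oddDoubleFact]; ring
          _ ≤ (2*k+1) * oddDoubleFact m := Nat.mul_le_mul_left _ (ih k hk)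
      have h2 : oddDoubleFact (k+1) * oddDoubleFact (m-k) * m.choose (k+1)
          ≤ (2*m - (2*k+1)) * oddDoubleFact m := by
        rcases Nat.lt_or_ge k m with hlt | hge
        · have hmk : m - k = (m - (k+1)) + 1 := by omega
          calc oddDoubleFact (k+1) * oddDoubleFact (m-k) * m.choose (k+1)
              = (2*(m-(k+1))+1) * (oddDoubleFact (k+1) * oddDoubleFact (m-(k+1)) * m.choose (k+1)) := by
                rw [hmk]; simp [oddDoubleFact]; ring
            _ ≤ (2*(m-(k+1))+1) * oddDoubleFact m := Nat.mul_le_mul_left _ (ih (k+1) hlt)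
            _ = (2*m - (2*k+1)) * oddDoubleFact m := by congr 1; omega
        · have hz : m.choose (k+1) = 0 := Nat.choose_eq_zero_of_lt (by omega)
          simp [hz]
      calc oddDoubleFact (k+1) * oddDoubleFact (m-k) * (m.choose k + m.choose (k+1))
          = oddDoubleFact (k+1) * oddDoubleFact (m-k) * m.choose k
            + oddDoubleFact (k+1) * oddDoubleFact (m-k) * m.choose (k+1) := by ring
        _ ≤ (2*k+1) * oddDoubleFact m + (2*m - (2*k+1)) * oddDoubleFact m :=
            Nat.add_le_add h1 h2
        _ = ((2*k+1) + (2*m - (2*k+1))) * oddDoubleFact m := by ring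
        _ ≤ (2*m+1) * oddDoubleFact m := Nat.mul_le_mul_right _ (by omega)
        _ = oddDoubleFact (m+1) := by simp [oddDoubleFact]
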